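/- arXiv:2210.13032 — 7 statements merged into one kernel-verified Lean document; each statement's English description precedes it below -/
import Mathlib

section
/- Let N, K be natural numbers with N ≥ 1, and let z₀, z₁, …, z_K ∈ ℂ^N be vectors such that the matrix S̄ = (1/(K+1)) Σ_{k=0}^{K} z_k z_kᴴ is Hermitian positive definite. Then for every N×N complex Hermitian positive definite matrix C, one has (K+1)·Real.log(det C).re + Σ_{k=0}^{K} Re(z_kᴴ C⁻¹ z_k) ≥ (K+1)·Real.log(det S̄).re + (K+1)·N, with equality if and only if C = S̄. Equivalently, the complex Gaussian likelihood (π^N det C)^{−(K+1)} exp(−Σ_k z_kᴴ C⁻¹ z_k) over Hermitian positive definite C is uniquely maximized at C = S̄ (the sample covariance matrix). -/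
open Matrix
open scoped ComplexOrder

lemma trace_eq_sum_eigen {N : ℕ} {B : Matrix (Fin N) (Fin N) ℂ} (hB : B.IsHermitian) :
    B.trace = ∑ i, (hB.eigenvalues i : ℂ) := by
  conv_lhs => rw [hB.spectral_theorem]
  rw [Unitary.conjStarAlgAut_apply, trace_mul_cycle, Unitary.star_mul_self_of_mem hB.eigenvectorUnitary.2,
    one_mul, trace_diagonal]
  rfl

lemma key_ineq {N : ℕ} {B : Matrix (Fin N) (Fin N) ℂ} (hB : B.PosDef) :
    Real.log B.det.re + N ≤ B.trace.re ∧ (B.trace.re = Real.log B.det.re + N ↔ B = 1) := by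
  have hH := hB.isHermitian
  have hev : ∀ i, 0 < hH.eigenvalues i := hB.eigenvalues_pos
  have hdet : B.det.re = ∏ i, hH.eigenvalues i := by
    rw [hH.det_eq_prod_eigenvalues]
    norm_cast
  have htr : B.trace.re = ∑ i, hH.eigenvalues i := by
    rw [trace_eq_sum_eigen hH]
    norm_cast
  have hlog : Real.log B.det.re = ∑ i, Real.log (hH.eigenvalues i) := by
    rw [hdet, Real.log_prod fun i _ => (hev i).ne']
  have hle : ∀ i ∈ Finset.univ, Real.log (hH.eigenvalues i) + 1 ≤ hH.eigenvalues i := by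
    intro i _
    have := Real.log_le_sub_one_of_pos (hev i)
    linarith
  have hsum : ∑ i, (Real.log (hH.eigenvalues i) + 1) ≤ ∑ i, hH.eigenvalues i :=
    Finset.sum_le_sum hle
  rw [Finset.sum_add_distrib, Finset.sum_const, Finset.card_univ, Fintype.card_fin,
    nsmul_eq_mul, mul_one] at hsum
  constructor
  · rw [htr, hlog]; exact hsum
  constructor
  · intro heq
    rw [htr, hlog] at heq
    have heq' : ∑ i, (Real.log (hH.eigenvalues i) + 1) = ∑ i, hH.eigenvalues i := by
      rw [Finset.sum_add_distrib, Finset.sum_const, Finset.card_univ, Fintype.card_fin,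
        nsmul_eq_mul, mul_one, ← heq]
    have hall := (Finset.sum_eq_sum_iff_of_le hle).mp heq'
    have hone : ∀ i, hH.eigenvalues i = 1 := by
      intro i
      by_contra hne
      have := Real.log_lt_sub_one_of_pos (hev i) hne
      have h2 := hall i (Finset.mem_univ i)
      linarith
    have hfun : (RCLike.ofReal ∘ hH.eigenvalues : Fin N → ℂ) = fun _ => 1 := by
      funext i
      simp [hone i]
    conv_lhs => rw [hH.spectral_theorem, hfun, diagonal_one, Unitary.conjStarAlgAut_apply, mul_one,
      Unitary.mul_star_self_of_mem hH.eigenvectorUnitary.2]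
  · rintro rfl
    simp

lemma trace_mul_vecMulVec {N : ℕ} (T : Matrix (Fin N) (Fin N) ℂ) (z : Fin N → ℂ) :
    (T * vecMulVec z (star z)).trace = star z ⬝ᵥ (T *ᵥ z) := by
  simp only [trace, diag, mul_apply, vecMulVec_apply, dotProduct, mulVec, Pi.star_apply,
    Finset.mul_sum]
  exact Finset.sum_congr rfl fun i _ => Finset.sum_congr rfl fun j _ => by ring


/-- Goodman's result. For data `z₀, …, z_K` whose sample covariance
`S̄ = (1/(K+1)) Σ_k z_k z_kᴴ` is Hermitian positive definite, the negative complex Gaussian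
log-likelihood functional `(K+1)·log(det C) + Σ_k Re(z_kᴴ C⁻¹ z_k)` over Hermitian positive
definite matrices `C` is at least `(K+1)·log(det S̄) + (K+1)·N`, with equality iff `C = S̄`;
i.e. the Gaussian likelihood is uniquely maximized at the sample covariance matrix. -/
theorem stmt3 (N K : ℕ) (hN : 1 ≤ N) (z : Fin (K + 1) → Fin N → ℂ)
    (Sbar : Matrix (Fin N) (Fin N) ℂ)
    (hSbar : Sbar = ((K : ℝ) + 1)⁻¹ • ∑ k, vecMulVec (z k) (star (z k)))
    (hpos : Sbar.PosDef)
    (C : Matrix (Fin N) (Fin N) ℂ) (hC : C.PosDef) :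
    (((K : ℝ) + 1) * Real.log C.det.re + ∑ k, (star (z k) ⬝ᵥ (C⁻¹ *ᵥ z k)).re
      ≥ ((K : ℝ) + 1) * Real.log Sbar.det.re + ((K : ℝ) + 1) * (N : ℝ)) ∧
    (((K : ℝ) + 1) * Real.log C.det.re + ∑ k, (star (z k) ⬝ᵥ (C⁻¹ *ᵥ z k)).re
        = ((K : ℝ) + 1) * Real.log Sbar.det.re + ((K : ℝ) + 1) * (N : ℝ)
      ↔ C = Sbar) := by
  set c : ℝ := (K : ℝ) + 1 with hcdef
  have hc : (0 : ℝ) < c := by positivity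
  -- basic determinant facts
  have hdSpos : 0 < Sbar.det.re ∧ Sbar.det.im = 0 := by
    have := hpos.det_pos
    rw [Complex.lt_def] at this
    simpa using ⟨this.1, this.2.symm⟩
  have hdCpos : 0 < C.det.re ∧ C.det.im = 0 := by
    have := hC.det_pos
    rw [Complex.lt_def] at this
    simpa using ⟨this.1, this.2.symm⟩
  set dS : ℝ := Sbar.det.re
  set dC : ℝ := C.det.re
  have hSdet : Sbar.det = (dS : ℂ) := Complex.ext rfl hdSpos.2
  have hCdet : C.det = (dC : ℂ) := Complex.ext rfl hdCpos.2
  have hCdet0 : C.det ≠ 0 := by rw [hCdet]; exact_mod_cast hdCpos.1.ne'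
  -- square root of Sbar
  set Q : Matrix (Fin N) (Fin N) ℂ := (by open scoped MatrixOrder in exact CFC.sqrt Sbar) with hQdef
  have hQps : Q.PosSemidef := by open scoped MatrixOrder in exact (CFC.sqrt_nonneg Sbar).posSemidef
  have hQH : Q.IsHermitian := hQps.1
  have hQQ : Q * Q = Sbar := by open scoped MatrixOrder in exact CFC.sqrt_mul_sqrt_self Sbar hpos.posSemidef.nonneg
  have hQdet0 : Q.det ≠ 0 := by
    intro h
    have : Sbar.det = 0 := by rw [← hQQ, det_mul, h, mul_zero]
    rw [hSdet] at this
    exact_mod_cast hdSpos.1.ne' (by exact_mod_cast this)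
  have hQunit : IsUnit Q := (isUnit_iff_isUnit_det _).2 hQdet0.isUnit
  have hQu : IsUnit Q.det := hQdet0.isUnit
  have hCu : IsUnit C.det := hCdet0.isUnit
  -- B := Q * C⁻¹ * Q is positive definite
  set B : Matrix (Fin N) (Fin N) ℂ := Q * C⁻¹ * Q with hBdef
  have hCinv : C⁻¹.PosDef := hC.inv
  have hB : B.PosDef := by
    apply PosDef.of_dotProduct_mulVec_pos
    · show Bᴴ = B
      rw [hBdef, conjTranspose_mul, conjTranspose_mul, hQH.eq, hCinv.isHermitian.eq, mul_assoc]
    · intro x hx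
      have hQx : Q *ᵥ x ≠ 0 :=
        (Matrix.mulVec_injective_iff_isUnit.mpr hQunit).ne_iff' (by simp) |>.2 hx
      have : star x ⬝ᵥ B *ᵥ x = star (Q *ᵥ x) ⬝ᵥ C⁻¹ *ᵥ (Q *ᵥ x) := by
        rw [hBdef, ← mulVec_mulVec, ← mulVec_mulVec, dotProduct_mulVec (star x) Q,
          star_mulVec, hQH.eq]
      rw [this]
      exact hCinv.dotProduct_mulVec_pos hQx
  -- trace of B
  set t : ℝ := ((C⁻¹ * Sbar).trace).re with htdef
  have hBtr : B.trace = (C⁻¹ * Sbar).trace := by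
    rw [hBdef, mul_assoc, trace_mul_comm, mul_assoc, hQQ]
  -- determinant of B
  have hBdet : B.det.re = dS / dC := by
    have : B.det = ((dS / dC : ℝ) : ℂ) := by
      rw [hBdef, det_mul, det_mul, det_nonsing_inv, Ring.inverse_eq_inv', mul_comm Q.det,
        mul_assoc, ← det_mul, hQQ, hSdet, hCdet]
      push_cast
      ring
    rw [this, Complex.ofReal_re]
  have hkey := key_ineq hB
  rw [hBdet, hBtr, Real.log_div hdSpos.1.ne' hdCpos.1.ne'] at hkey
  -- sum rewriting
  have hzsum : (∑ k, vecMulVec (z k) (star (z k))) = c • Sbar := by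
    rw [hSbar, smul_inv_smul₀ hc.ne']
  have hsum : ∑ k, (star (z k) ⬝ᵥ (C⁻¹ *ᵥ z k)).re = c * t := by
    have h1 : ∑ k, (star (z k) ⬝ᵥ (C⁻¹ *ᵥ z k)) = (c : ℂ) * (C⁻¹ * Sbar).trace := by
      simp_rw [← trace_mul_vecMulVec]
      rw [← trace_sum, ← Finset.mul_sum, hzsum, mul_smul_comm, trace_smul, Complex.real_smul]
    calc ∑ k, (star (z k) ⬝ᵥ (C⁻¹ *ᵥ z k)).re
        = (∑ k, star (z k) ⬝ᵥ (C⁻¹ *ᵥ z k)).re := (Complex.re_sum _ _).symm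
      _ = ((c : ℂ) * (C⁻¹ * Sbar).trace).re := by rw [h1]
      _ = c * t := by rw [htdef, Complex.re_ofReal_mul]
  rw [hsum]
  -- B = 1 ↔ C = Sbar
  have hBiff : B = 1 ↔ C = Sbar := by
    constructor
    · intro h1
      have hCinveq : C⁻¹ = Q⁻¹ * Q⁻¹ := by
        have : Q⁻¹ * (Q * C⁻¹ * Q) * Q⁻¹ = C⁻¹ := by
          rw [← mul_assoc, mul_assoc (Q⁻¹ * (Q * C⁻¹)), Matrix.mul_nonsing_inv _ hQu,
            mul_one, ← mul_assoc, Matrix.nonsing_inv_mul _ hQu, one_mul]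
        rw [← this, ← hBdef, h1, mul_one]
      have : C = (C⁻¹)⁻¹ := (Matrix.nonsing_inv_nonsing_inv _ hCu).symm
      rw [this, hCinveq, Matrix.mul_inv_rev, Matrix.nonsing_inv_nonsing_inv _ hQu, hQQ]
    · rintro rfl
      rw [hBdef, ← hQQ, Matrix.mul_inv_rev,
        show Q * (Q⁻¹ * Q⁻¹) * Q = (Q * Q⁻¹) * (Q⁻¹ * Q) by noncomm_ring,
        Matrix.mul_nonsing_inv _ hQu, Matrix.nonsing_inv_mul _ hQu, one_mul]
  rw [← htdef] at hkey
  constructor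
  · have := mul_le_mul_of_nonneg_left hkey.1 hc.le
    nlinarith [this]
  · constructor
    · intro h
      have h2 : c * t = c * (Real.log dS - Real.log dC + (N : ℝ)) := by linear_combination h
      exact hBiff.mp (hkey.2.mp (mul_left_cancel₀ hc.ne' h2))
    · intro h
      have h3 : t = Real.log dS - Real.log dC + (N : ℝ) := hkey.2.mpr (hBiff.mpr h)
      rw [h3]; ring
end

section
/- Let N be a positive natural number, let S be an N×N complex Hermitian positive definite matrix, let g ∈ ℂ^N be nonzero, and let z ∈ ℂ^N. Then the minimum over s ∈ ℝ of Re(det(S + (z − s·g)(z − s·g)ᴴ)) equals det(S)·(1 + Re(zᴴ S⁻¹ z) − (Re(gᴴ S⁻¹ z))²/(gᴴ S⁻¹ g)), where det(S) is a positive real number, and the minimum is attained at ŝ = Re(gᴴ S⁻¹ z)/(gᴴ S⁻¹ g). -/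
open Matrix
open scoped ComplexOrder

lemma det_rankone_update {N : ℕ} (S : Matrix (Fin N) (Fin N) ℂ) (hS : S.PosDef)
    (w : Fin N → ℂ) :
    (S + vecMulVec w (star w)).det = S.det * (1 + star w ⬝ᵥ (S⁻¹ *ᵥ w)) := by
  have hdet : IsUnit S.det := isUnit_iff_ne_zero.mpr hS.det_pos.ne'
  rw [vecMulVec_eq Unit, Matrix.det_add_replicateCol_mul_replicateRow hdet]
  congr 1
  rw [Matrix.det_unique]
  simp only [Matrix.add_apply, Matrix.one_apply_eq, Matrix.mul_apply, Matrix.replicateRow_apply,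
    Matrix.replicateCol_apply, dotProduct, mulVec, Pi.star_apply, Finset.mul_sum, Finset.sum_mul]
  congr 1
  rw [Finset.sum_comm]
  apply Finset.sum_congr rfl; intro i _
  apply Finset.sum_congr rfl; intro j _
  ring

/-- the minimum over `s ∈ ℝ` of `Re(det(S + (z − s·g)(z − s·g)ᴴ))` equals
`det(S)·(1 + Re(zᴴ S⁻¹ z) − (Re(gᴴ S⁻¹ z))²/(gᴴ S⁻¹ g))` (with `det S` a positive real),
attained at `ŝ = Re(gᴴ S⁻¹ z)/(gᴴ S⁻¹ g)`. -/
theorem stmt5 (N : ℕ) (hN : 0 < N) (S : Matrix (Fin N) (Fin N) ℂ) (hS : S.PosDef)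
    (g : Fin N → ℂ) (hg : g ≠ 0) (z : Fin N → ℂ) :
    let f : ℝ → ℝ := fun s =>
      ((S + vecMulVec (z - (s : ℂ) • g) (star (z - (s : ℂ) • g))).det).re
    let shat : ℝ := (star g ⬝ᵥ (S⁻¹ *ᵥ z)).re / (star g ⬝ᵥ (S⁻¹ *ᵥ g)).re
    let V : ℝ := S.det.re * (1 + (star z ⬝ᵥ (S⁻¹ *ᵥ z)).re -
      (star g ⬝ᵥ (S⁻¹ *ᵥ z)).re ^ 2 / (star g ⬝ᵥ (S⁻¹ *ᵥ g)).re)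
    0 < S.det.re ∧ f shat = V ∧ ∀ s : ℝ, V ≤ f s := by
  intro f shat V
  have hdetpos : (0 : ℂ) < S.det := hS.det_pos
  have hre : 0 < S.det.re := (Complex.lt_def.mp hdetpos).1
  have him : S.det.im = 0 := (Complex.lt_def.mp hdetpos).2.symm
  have hAinv : (S⁻¹).PosDef := hS.inv
  have hAH : S⁻¹ᴴ = S⁻¹ := hAinv.1
  have hAe : ∀ i j, (starRingEnd ℂ) (S⁻¹ i j) = S⁻¹ j i := by
    intro i j
    have := congrFun (congrFun hAH j) i
    simpa [Matrix.conjTranspose_apply] using this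
  have hcpos : 0 < (star g ⬝ᵥ (S⁻¹ *ᵥ g)).re := hAinv.re_dotProduct_pos hg
  have hsym : (star z ⬝ᵥ (S⁻¹ *ᵥ g)).re = (star g ⬝ᵥ (S⁻¹ *ᵥ z)).re := by
    have h : star z ⬝ᵥ (S⁻¹ *ᵥ g) = star (star g ⬝ᵥ (S⁻¹ *ᵥ z)) := by
      simp only [dotProduct, mulVec, Pi.star_apply, Complex.star_def, map_sum,
        _root_.map_mul, Complex.conj_conj, hAe, Finset.mul_sum]
      rw [Finset.sum_comm]
      apply Finset.sum_congr rfl; intro i _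
      apply Finset.sum_congr rfl; intro j _
      ring
    rw [h, Complex.star_def, Complex.conj_re]
  have key : ∀ s : ℝ, f s = S.det.re * (1 + (star z ⬝ᵥ (S⁻¹ *ᵥ z)).re
      - 2 * s * (star g ⬝ᵥ (S⁻¹ *ᵥ z)).re + s ^ 2 * (star g ⬝ᵥ (S⁻¹ *ᵥ g)).re) := by
    intro s
    have h1 : f s = (S.det * (1 + star (z - (s : ℂ) • g) ⬝ᵥ
        (S⁻¹ *ᵥ (z - (s : ℂ) • g)))).re := by
      simp only [f]
      rw [det_rankone_update S hS]
    have h2 : star (z - (s : ℂ) • g) ⬝ᵥ (S⁻¹ *ᵥ (z - (s : ℂ) • g)) =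
        star z ⬝ᵥ (S⁻¹ *ᵥ z) - (s : ℂ) * (star z ⬝ᵥ (S⁻¹ *ᵥ g))
          - (s : ℂ) * (star g ⬝ᵥ (S⁻¹ *ᵥ z))
          + ((s ^ 2 : ℝ) : ℂ) * (star g ⬝ᵥ (S⁻¹ *ᵥ g)) := by
      rw [star_sub, star_smul, Complex.star_def, Complex.conj_ofReal,
        Matrix.mulVec_sub, Matrix.mulVec_smul]
      simp only [sub_dotProduct, dotProduct_sub, smul_dotProduct, dotProduct_smul,
        smul_eq_mul]
      push_cast
      ring
    rw [h1, h2, Complex.mul_re, him]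
    simp only [Complex.add_re, Complex.sub_re, Complex.one_re, Complex.mul_re,
      Complex.ofReal_re, Complex.ofReal_im, zero_mul, sub_zero, Complex.ofReal_mul]
    rw [hsym]
    ring
  have hV : V = S.det.re * (1 + (star z ⬝ᵥ (S⁻¹ *ᵥ z)).re -
      (star g ⬝ᵥ (S⁻¹ *ᵥ z)).re ^ 2 / (star g ⬝ᵥ (S⁻¹ *ᵥ g)).re) := rfl
  have hshat : shat = (star g ⬝ᵥ (S⁻¹ *ᵥ z)).re / (star g ⬝ᵥ (S⁻¹ *ᵥ g)).re := rfl
  set a := (star z ⬝ᵥ (S⁻¹ *ᵥ z)).re with ha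
  set b := (star g ⬝ᵥ (S⁻¹ *ᵥ z)).re with hb
  set c := (star g ⬝ᵥ (S⁻¹ *ᵥ g)).re with hc
  have hcne : c ≠ 0 := hcpos.ne'
  refine ⟨hre, ?_, ?_⟩
  · rw [key shat, hV, hshat]
    field_simp
    ring
  · intro s
    rw [key s, hV]
    have h2 : 2 * s * b - s ^ 2 * c ≤ b ^ 2 / c := by
      rw [le_div_iff₀ hcpos]
      nlinarith [sq_nonneg (b - s * c)]
    exact mul_le_mul_of_nonneg_left (by linarith) hre.le
end

section
/- Let μ, Z, λ, x, φ ∈ ℂ with Z ≠ 0, define M₀(y) = [[cosh(μy), −(1/Z)·sinh(μy)], [−Z·sinh(μy), cosh(μy)]] and M₁(φ) = [[Z·sinh(μφ)·cosh(μ(x−φ)), −cosh(μφ)·cosh(μ(x−φ))], [−Z²·sinh(μφ)·sinh(μ(x−φ)), Z·cosh(μφ)·sinh(μ(x−φ))]]. Then M₀(x − φ) · [[1, −λ], [0, 1]] · M₀(φ) = M₀(x) + λ·M₁(φ). -/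
open Matrix

/-- The field matrix `M₀(y)` of an intact pipeline segment of length `y`, with
propagation function `μ` and characteristic impedance `Z`. -/
noncomputable def fieldMatrix (μ Z y : ℂ) : Matrix (Fin 2) (Fin 2) ℂ :=
  !![Complex.cosh (μ * y), -(1 / Z) * Complex.sinh (μ * y);
     -Z * Complex.sinh (μ * y), Complex.cosh (μ * y)]

/-- The leak matrix `M₁(φ)` for a leak at location `φ` in a pipe of length `x`. -/
noncomputable def leakMatrix (μ Z x φ : ℂ) : Matrix (Fin 2) (Fin 2) ℂ :=
  !![Z * Complex.sinh (μ * φ) * Complex.cosh (μ * (x - φ)),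
     -(Complex.cosh (μ * φ) * Complex.cosh (μ * (x - φ)));
     -(Z ^ 2 * Complex.sinh (μ * φ) * Complex.sinh (μ * (x - φ))),
     Z * Complex.cosh (μ * φ) * Complex.sinh (μ * (x - φ))]

/-- the transfer-matrix decomposition
`M₀(x − φ) · [[1, −λ], [0, 1]] · M₀(φ) = M₀(x) + λ·M₁(φ)`. -/
theorem stmt9 (μ Z lam x φ : ℂ) (hZ : Z ≠ 0) :
    fieldMatrix μ Z (x - φ) * !![1, -lam; 0, 1] * fieldMatrix μ Z φ =
      fieldMatrix μ Z x + lam • leakMatrix μ Z x φ := by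
  have hx : μ * x = μ * (x - φ) + μ * φ := by ring
  have hx : μ * x = μ * (x - φ) + μ * φ := by ring
  unfold fieldMatrix leakMatrix
  ext i j
  fin_cases i <;> fin_cases j <;>
    simp only [Matrix.mul_apply, Fin.sum_univ_succ, Fin.sum_univ_zero, Matrix.cons_val',
      Matrix.cons_val_zero, Matrix.cons_val_one, Matrix.head_cons, Matrix.head_fin_const,
      Matrix.empty_val', Matrix.cons_val_fin_one, Matrix.smul_apply, Matrix.add_apply,
      smul_eq_mul, add_zero, hx, Complex.cosh_add, Complex.sinh_add, Matrix.of_apply, Fin.zero_eta,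
        Fin.mk_one, Matrix.cons_val_succ] <;>
    field_simp <;> ring
end

section
/- Let N be a positive natural number, let C be an N×N complex Hermitian positive semidefinite matrix, and let c > 0, ρ ∈ (0,1), and ρ̲ > 0 be real numbers. Then there exists a unique real number m > 0 satisfying m = ( ρ̲ + c·(1−ρ)·(1/N)·Re(tr(C·(I_N + (1−ρ)·m·C)⁻¹)) )⁻¹, i.e., the fixed-point equation m_N(−ρ̲) = (ρ̲ + c(1−ρ)(1/N)tr[C(I + (1−ρ)m C)⁻¹])⁻¹ defining the Stieltjes-transform quantity m_N(−ρ̲) has a unique positive solution. -/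
open Matrix
open scoped ComplexOrder

lemma trace_res {N : ℕ} (C : Matrix (Fin N) (Fin N) ℂ) (hC : C.PosSemidef)
    (t : ℝ) (ht : 0 ≤ t) :
    (Matrix.trace (C * ((1 : Matrix (Fin N) (Fin N) ℂ) + t • C)⁻¹)).re
      = ∑ i, hC.1.eigenvalues i / (1 + t * hC.1.eigenvalues i) := by
  classical
  set U : Matrix (Fin N) (Fin N) ℂ := (hC.1.eigenvectorUnitary : Matrix (Fin N) (Fin N) ℂ) with hU
  set lam := hC.1.eigenvalues with hlam
  have hpos : ∀ i, (0:ℝ) < 1 + t * lam i := fun i => by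
    have := hC.eigenvalues_nonneg i
    nlinarith
  have hne : ∀ i, (1 + (t : ℂ) * lam i) ≠ 0 := fun i => by
    intro h
    have := congrArg Complex.re h
    simp at this
    exact (hpos i).ne' this
  have hUU : U * star U = 1 := (Matrix.mem_unitaryGroup_iff).mp hC.1.eigenvectorUnitary.2
  have hUU' : star U * U = 1 := (Matrix.mem_unitaryGroup_iff').mp hC.1.eigenvectorUnitary.2
  have hspec : C = U * diagonal (RCLike.ofReal ∘ lam) * star U := hC.1.spectral_theorem
  have h1 : (1 : Matrix (Fin N) (Fin N) ℂ) + t • C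
      = U * diagonal (fun i => (1 + (t:ℂ) * lam i)) * star U := by
    have : diagonal (fun i => (1 + (t:ℂ) * lam i))
        = 1 + t • diagonal (RCLike.ofReal ∘ lam) := by
      ext i j
      rcases eq_or_ne i j with h|h
      · subst h
        simp [Matrix.diagonal_apply_eq, Matrix.one_apply_eq, Complex.real_smul]
      · simp [Matrix.diagonal_apply_ne _ h, Matrix.one_apply_ne h]
    rw [this, mul_add, add_mul, mul_one, hUU, Matrix.mul_smul, Matrix.smul_mul, ← hspec]
  have hinv : ((1 : Matrix (Fin N) (Fin N) ℂ) + t • C)⁻¹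
      = U * diagonal (fun i => (1 + (t:ℂ) * lam i)⁻¹) * star U := by
    rw [h1]
    refine Matrix.inv_eq_left_inv ?_
    calc U * diagonal (fun i => (1 + (t:ℂ) * lam i)⁻¹) * star U *
          (U * diagonal (fun i => (1 + (t:ℂ) * lam i)) * star U)
        = U * (diagonal (fun i => (1 + (t:ℂ) * lam i)⁻¹) * ((star U * U) *
            diagonal (fun i => (1 + (t:ℂ) * lam i)))) * star U := by
          noncomm_ring
      _ = 1 := by
          rw [hUU', one_mul, diagonal_mul_diagonal]
          have : (fun i => (1 + (t:ℂ) * lam i)⁻¹ * (1 + (t:ℂ) * lam i)) = fun _ => (1:ℂ) := by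
            funext i; exact inv_mul_cancel₀ (hne i)
          rw [this, diagonal_one, mul_one, hUU]
  have htr : Matrix.trace (C * ((1 : Matrix (Fin N) (Fin N) ℂ) + t • C)⁻¹)
      = ∑ i, (lam i : ℂ) * (1 + (t:ℂ) * lam i)⁻¹ := by
    rw [hinv, hspec]
    have : U * diagonal (RCLike.ofReal ∘ lam) * star U *
        (U * diagonal (fun i => (1 + (t:ℂ) * lam i)⁻¹) * star U)
        = U * (diagonal (RCLike.ofReal ∘ lam) * ((star U * U) *
            diagonal (fun i => (1 + (t:ℂ) * lam i)⁻¹))) * star U := by noncomm_ring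
    rw [this, hUU', one_mul, diagonal_mul_diagonal, Matrix.trace_mul_cycle,
      hUU', one_mul, Matrix.trace_diagonal]
    rfl
  rw [htr]
  rw [Complex.re_sum]
  refine Finset.sum_congr rfl fun i _ => ?_
  have : ((lam i : ℂ) * (1 + (t:ℂ) * lam i)⁻¹) = ((lam i / (1 + t * lam i) : ℝ) : ℂ) := by
    push_cast
    ring
  rw [this, Complex.ofReal_re]

set_option maxHeartbeats 1000000 in
/-- existence and uniqueness of the positive solution of the fixed-point
equation `m = (ρ̲ + c(1−ρ)(1/N)·Re tr[C(I + (1−ρ)m C)⁻¹])⁻¹` defining the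
Stieltjes-transform quantity `m_N(−ρ̲)`. -/
theorem stmt12 (N : ℕ) (hN : 0 < N) (C : Matrix (Fin N) (Fin N) ℂ)
    (hC : C.PosSemidef) (c ρ ρul : ℝ) (hc : 0 < c) (hρ : ρ ∈ Set.Ioo (0 : ℝ) 1)
    (hρul : 0 < ρul) :
    ∃! m : ℝ, 0 < m ∧
      m = (ρul + c * (1 - ρ) * ((1 : ℝ) / N) *
        (Matrix.trace (C * ((1 : Matrix (Fin N) (Fin N) ℂ) + ((1 - ρ) * m) • C)⁻¹)).re)⁻¹ := by
  classical
  obtain ⟨hρ0, hρ1⟩ := hρ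
  have h1ρ : 0 < 1 - ρ := by linarith
  set lam := hC.1.eigenvalues with hlam
  have hlamnn : ∀ i, 0 ≤ lam i := fun i => hC.eigenvalues_nonneg i
  set φ : ℝ → ℝ := fun t => ∑ i, lam i / (1 + t * lam i) with hφ
  set K : ℝ := c * (1 - ρ) * ((1 : ℝ) / N) with hK
  have hNpos : (0:ℝ) < N := Nat.cast_pos.mpr hN
  have hKpos : 0 < K := by
    apply mul_pos (mul_pos hc h1ρ) (div_pos one_pos hNpos)
  have hden : ∀ t : ℝ, 0 ≤ t → ∀ i, (0:ℝ) < 1 + t * lam i := by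
    intro t ht i; nlinarith [hlamnn i]
  have hφnn : ∀ t : ℝ, 0 ≤ t → 0 ≤ φ t := by
    intro t ht
    apply Finset.sum_nonneg
    intro i _
    exact div_nonneg (hlamnn i) (hden t ht i).le
  have hφanti : ∀ t₁ t₂ : ℝ, 0 ≤ t₁ → t₁ ≤ t₂ → φ t₂ ≤ φ t₁ := by
    intro t₁ t₂ ht₁ h12
    apply Finset.sum_le_sum
    intro i _
    have h1 := hden t₁ ht₁ i
    gcongr
    · exact hlamnn i
    · nlinarith [hlamnn i]
  have hφcont : ContinuousOn φ (Set.Ici 0) := by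
    apply continuousOn_finset_sum
    intro i _
    apply ContinuousOn.div continuousOn_const
    · exact (continuous_const.add (continuous_id.mul continuous_const)).continuousOn
    · intro t ht; exact (hden t ht i).ne'
  set g : ℝ → ℝ := fun m => m⁻¹ - ρul - K * φ ((1 - ρ) * m) with hg
  -- key rewriting: for m > 0, the fixed point equation is equivalent to g m = 0
  have key : ∀ m : ℝ, 0 < m →
      (m = (ρul + K *
        (Matrix.trace (C * ((1 : Matrix (Fin N) (Fin N) ℂ) + ((1 - ρ) * m) • C)⁻¹)).re)⁻¹
      ↔ g m = 0) := by
    intro m hm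
    have ht : 0 ≤ (1 - ρ) * m := by positivity
    rw [trace_res C hC _ ht]
    have hD : 0 < ρul + K * φ ((1 - ρ) * m) := by
      have := hφnn _ ht
      nlinarith
    constructor
    · intro h
      have h2 : m⁻¹ = ρul + K * φ ((1 - ρ) * m) := by
        conv_lhs => rw [h, inv_inv]
      simp only [hg]; linarith
    · intro h
      have h' : m⁻¹ = ρul + K * φ ((1 - ρ) * m) := by
        simp only [hg] at h; linarith
      rw [← h', inv_inv]
  -- uniqueness of positive zeros of g
  have uniq : ∀ m₁ m₂ : ℝ, 0 < m₁ → 0 < m₂ → g m₁ = 0 → g m₂ = 0 → m₁ = m₂ := by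
    intro m₁ m₂ hm₁ hm₂ hg₁ hg₂
    have hinv1 : m₁⁻¹ = ρul + K * φ ((1 - ρ) * m₁) := by
      simp only [hg] at hg₁; linarith
    have hinv2 : m₂⁻¹ = ρul + K * φ ((1 - ρ) * m₂) := by
      simp only [hg] at hg₂; linarith
    have p1 : m₁ * (ρul + K * φ ((1 - ρ) * m₁)) = 1 := by
      rw [← hinv1]; exact mul_inv_cancel₀ hm₁.ne'
    have p2 : m₂ * (ρul + K * φ ((1 - ρ) * m₂)) = 1 := by
      rw [← hinv2]; exact mul_inv_cancel₀ hm₂.ne'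
    have hd₁ : ∀ i, (0:ℝ) < 1 + (1 - ρ) * m₁ * lam i := hden _ (by positivity)
    have hd₂ : ∀ i, (0:ℝ) < 1 + (1 - ρ) * m₂ * lam i := hden _ (by positivity)
    set S : ℝ := ∑ i, (lam i / (1 + (1 - ρ) * m₁ * lam i)) *
      (lam i / (1 + (1 - ρ) * m₂ * lam i)) with hS
    have hdiff : φ ((1 - ρ) * m₁) - φ ((1 - ρ) * m₂)
        = ((1 - ρ) * m₂ - (1 - ρ) * m₁) * S := by
      simp only [hφ, hS]
      rw [← Finset.sum_sub_distrib, Finset.mul_sum]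
      refine Finset.sum_congr rfl fun i _ => ?_
      have h1 := hd₁ i; have h2 := hd₂ i
      rw [div_sub_div _ _ h1.ne' h2.ne', div_mul_div_comm, ← mul_div_assoc,
        div_eq_div_iff (mul_ne_zero h1.ne' h2.ne') (mul_ne_zero h1.ne' h2.ne')]
      ring
    -- the contraction bound E < 1
    set E : ℝ := K * (1 - ρ) * m₁ * m₂ * S with hE
    have hterm : ∀ i : Fin N,
        (1 - ρ) * m₁ * m₂ * ((lam i / (1 + (1 - ρ) * m₁ * lam i)) *
          (lam i / (1 + (1 - ρ) * m₂ * lam i)))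
        ≤ (m₁ * (lam i / (1 + (1 - ρ) * m₁ * lam i)) +
           m₂ * (lam i / (1 + (1 - ρ) * m₂ * lam i))) / 2 := by
      intro i
      set u : ℝ := lam i / (1 + (1 - ρ) * m₁ * lam i) with hu
      set v : ℝ := lam i / (1 + (1 - ρ) * m₂ * lam i) with hv
      have hu0 : 0 ≤ u := div_nonneg (hlamnn i) (hd₁ i).le
      have hv0 : 0 ≤ v := div_nonneg (hlamnn i) (hd₂ i).le
      have hub : (1 - ρ) * m₁ * u ≤ 1 := by
        rw [hu, mul_div_assoc']
        exact (div_le_one (hd₁ i)).mpr (by linarith)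
      have hvb : (1 - ρ) * m₂ * v ≤ 1 := by
        rw [hv, mul_div_assoc']
        exact (div_le_one (hd₂ i)).mpr (by linarith)
      nlinarith [mul_nonneg (sub_nonneg.mpr hub) (mul_nonneg hm₂.le hv0),
        mul_nonneg (sub_nonneg.mpr hvb) (mul_nonneg hm₁.le hu0)]
    have hSsum : (1 - ρ) * m₁ * m₂ * S
        ≤ (m₁ * φ ((1 - ρ) * m₁) + m₂ * φ ((1 - ρ) * m₂)) / 2 := by
      simp only [hφ, hS]
      rw [Finset.mul_sum, Finset.mul_sum, Finset.mul_sum, ← Finset.sum_add_distrib,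
        Finset.sum_div]
      exact Finset.sum_le_sum fun i _ => hterm i
    have hE1 : K * (m₁ * φ ((1 - ρ) * m₁)) = 1 - ρul * m₁ := by linear_combination p1
    have hE2 : K * (m₂ * φ ((1 - ρ) * m₂)) = 1 - ρul * m₂ := by linear_combination p2
    have hElt : E < 1 := by
      have := mul_le_mul_of_nonneg_left hSsum hKpos.le
      simp only [hE]
      nlinarith
    have hfac : (m₁ - m₂) * (ρul + K * φ ((1 - ρ) * m₁) - K * (1 - ρ) * m₂ * S) = 0 := by
      linear_combination p1 - p2 - K * m₂ * hdiff
    have h3 : (ρul + K * φ ((1 - ρ) * m₁) - K * (1 - ρ) * m₂ * S) * m₁ = 1 - E := by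
      simp only [hE]; linear_combination p1
    have hpos2 : 0 < ρul + K * φ ((1 - ρ) * m₁) - K * (1 - ρ) * m₂ * S := by
      nlinarith
    rcases mul_eq_zero.mp hfac with h | h
    · linarith
    · exact absurd h hpos2.ne'
  -- existence via IVT
  set a : ℝ := (ρul + K * φ 0 + 1)⁻¹ with ha
  have hφ0 : 0 ≤ φ 0 := hφnn 0 le_rfl
  have hA : 0 < ρul + K * φ 0 + 1 := by nlinarith
  have ha0 : 0 < a := inv_pos.mpr hA
  set b : ℝ := a + 2 / ρul with hb
  have hb2 : 2 / ρul ≤ b := by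
    have : 0 < 2 / ρul := by positivity
    simp only [hb]; linarith
  have hb0 : 0 < b := lt_of_lt_of_le (by positivity) hb2
  have hab : a ≤ b := by
    have : 0 < 2 / ρul := by positivity
    simp only [hb]; linarith
  have hga : 0 < g a := by
    have hainv : a⁻¹ = ρul + K * φ 0 + 1 := by rw [ha, inv_inv]
    have hm : φ ((1 - ρ) * a) ≤ φ 0 := hφanti 0 _ le_rfl (by positivity)
    simp only [hg]
    nlinarith
  have hgb : g b < 0 := by
    have hbinv : b⁻¹ ≤ ρul / 2 := by
      have h2 : (0:ℝ) < 2 / ρul := by positivity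
      have : b⁻¹ ≤ (2 / ρul)⁻¹ := by
        apply inv_anti₀ h2 hb2
      rw [inv_div] at this
      linarith
    have hφb : 0 ≤ φ ((1 - ρ) * b) := hφnn _ (by positivity)
    simp only [hg]
    nlinarith
  have hgcont : ContinuousOn g (Set.Icc a b) := by
    apply ContinuousOn.sub
    apply ContinuousOn.sub
    · apply ContinuousOn.inv₀ continuousOn_id
      intro x hx
      exact (lt_of_lt_of_le ha0 hx.1).ne'
    · exact continuousOn_const
    · apply ContinuousOn.mul continuousOn_const
      apply hφcont.comp (continuous_const.mul continuous_id).continuousOn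
      intro x hx
      have : 0 < x := lt_of_lt_of_le ha0 hx.1
      simp only [Set.mem_Ici]
      exact mul_nonneg h1ρ.le this.le
  have hmem : (0:ℝ) ∈ Set.Icc (g b) (g a) := ⟨hgb.le, hga.le⟩
  obtain ⟨m, hmIcc, hgm⟩ := intermediate_value_Icc' hab hgcont hmem
  have hm0 : 0 < m := lt_of_lt_of_le ha0 hmIcc.1
  refine ⟨m, ⟨hm0, (key m hm0).mpr hgm⟩, ?_⟩
  intro y ⟨hy0, hy⟩
  exact uniq y m hy0 hm0 ((key y hy0).mp hy) hgm
end

section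
/- Let N be a positive natural number, let R be an N×N complex Hermitian positive semidefinite matrix with Re(tr R) > 0, let g ∈ ℂ^N be nonzero, and let c ∈ (0,1] be a real constant. For ρ ∈ (0,1) define Ĉ(ρ) = (1−ρ)·(N/Re(tr R))·R + ρ·I_N and σ̂²(ρ) = (Re(tr R)/(2(1−ρ)N)) · (1 − ρ·(gᴴ Ĉ(ρ)⁻² g)/(gᴴ Ĉ(ρ)⁻¹ g)) / (1 − c + c·ρ·(1/N)·Re(tr Ĉ(ρ)⁻¹))². Then σ̂²(ρ) tends to (gᴴ R g)/(2·gᴴ g) as ρ tends to 1 from the left. -/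
open Matrix
open scoped ComplexOrder

private lemma aux_real_smul_posSemidef {n : Type*} [Fintype n]
    {M : Matrix n n ℂ} (hM : M.PosSemidef) {r : ℝ} (hr : 0 ≤ r) :
    (r • M).PosSemidef := by
  constructor
  · show (r • M)ᴴ = r • M
    rw [conjTranspose_smul, star_trivial, hM.1]
  · exact (hM.smul hr).2

private lemma aux_real_smul_one_posDef {n : Type*} [Fintype n] [DecidableEq n]
    {r : ℝ} (hr : 0 < r) : (r • (1 : Matrix n n ℂ)).PosDef := by
  constructor
  · show (r • (1 : Matrix n n ℂ))ᴴ = r • 1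
    rw [conjTranspose_smul, star_trivial, conjTranspose_one]
  · exact (Matrix.PosDef.one.smul hr).2

/-- the consistent scale estimator
`σ̂²(ρ) = (tr R/(2(1−ρ)N)) · (1 − ρ (gᴴ Ĉ(ρ)⁻² g)/(gᴴ Ĉ(ρ)⁻¹ g)) / (1 − c + cρ(1/N) tr Ĉ(ρ)⁻¹)²`
built from the RSCM `Ĉ(ρ) = (1−ρ)(N/tr R)·R + ρ·I` tends to `gᴴ R g/(2 gᴴ g)` as
`ρ → 1⁻`. -/
theorem stmt14 (N : ℕ) (hN : 0 < N) (R : Matrix (Fin N) (Fin N) ℂ)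
    (hR : R.PosSemidef) (htr : 0 < (Matrix.trace R).re)
    (g : Fin N → ℂ) (hg : g ≠ 0) (c : ℝ) (hc : c ∈ Set.Ioc (0 : ℝ) 1) :
    let Chat : ℝ → Matrix (Fin N) (Fin N) ℂ := fun ρ =>
      (1 - ρ) • (((N : ℝ) / (Matrix.trace R).re) • R) + ρ • (1 : Matrix (Fin N) (Fin N) ℂ)
    let σ2hat : ℝ → ℝ := fun ρ =>
      ((Matrix.trace R).re / (2 * (1 - ρ) * (N : ℝ))) *
        (1 - ρ * (star g ⬝ᵥ ((((Chat ρ)⁻¹) ^ 2) *ᵥ g)).re /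
          (star g ⬝ᵥ ((Chat ρ)⁻¹ *ᵥ g)).re) /
        (1 - c + c * ρ * ((1 : ℝ) / (N : ℝ)) * (Matrix.trace ((Chat ρ)⁻¹)).re) ^ 2
    Filter.Tendsto σ2hat (nhdsWithin 1 (Set.Ioo (0 : ℝ) 1))
      (nhds ((star g ⬝ᵥ (R *ᵥ g)).re / (2 * (star g ⬝ᵥ g).re))) := by
  intro Chat σ2hat
  have hNR : (0:ℝ) < N := Nat.cast_pos.mpr hN
  set trR : ℝ := (Matrix.trace R).re with htrR
  set s : ℝ := (N:ℝ) / trR with hs_def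
  have hs : 0 < s := div_pos hNR htr
  set A : Matrix (Fin N) (Fin N) ℂ := s • R with hA_def
  have hAps : A.PosSemidef := aux_real_smul_posSemidef hR hs.le
  have hCdef : ∀ ρ : ℝ, Chat ρ = (1-ρ) • A + ρ • 1 := fun ρ => rfl
  have hPD : ∀ ρ ∈ Set.Ioc (0:ℝ) 1, (Chat ρ).PosDef := by
    intro ρ hρ
    rw [hCdef]
    exact Matrix.PosDef.posSemidef_add
      (aux_real_smul_posSemidef hAps (by linarith [hρ.2]))
      (aux_real_smul_one_posDef hρ.1)
  -- scalar quantities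
  set Φw : Matrix (Fin N) (Fin N) ℂ → ℝ := fun M => (star g ⬝ᵥ ((M * A * M) *ᵥ g)).re with hΦw_def
  set Φu : Matrix (Fin N) (Fin N) ℂ → ℝ := fun M => (star g ⬝ᵥ (M *ᵥ g)).re with hΦu_def
  set Φt : Matrix (Fin N) (Fin N) ℂ → ℝ := fun M => (Matrix.trace M).re with hΦt_def
  set F : ℝ → ℝ := fun ρ =>
    trR / (2 * N) * (Φw ((Chat ρ)⁻¹) / Φu ((Chat ρ)⁻¹)) /
      (1 - c + c * ρ * ((1:ℝ)/N) * Φt ((Chat ρ)⁻¹)) ^ 2 with hF_def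
  have hu_pos : ∀ ρ ∈ Set.Ioc (0:ℝ) 1, 0 < Φu ((Chat ρ)⁻¹) := by
    intro ρ hρ
    have h := ((hPD ρ hρ).inv).re_dotProduct_pos hg
    simpa [hΦu_def] using h
  -- σ2hat agrees with F on (0,1)
  have hEq : ∀ ρ ∈ Set.Ioo (0:ℝ) 1, σ2hat ρ = F ρ := by
    intro ρ hρ
    have hρ' : ρ ∈ Set.Ioc (0:ℝ) 1 := ⟨hρ.1, hρ.2.le⟩
    have hdetu : IsUnit (Chat ρ).det := (Matrix.isUnit_iff_isUnit_det _).mp (hPD ρ hρ').isUnit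
    have hm : (Chat ρ)⁻¹ * (Chat ρ) * (Chat ρ)⁻¹ = (Chat ρ)⁻¹ := by
      rw [Matrix.nonsing_inv_mul _ hdetu, Matrix.one_mul]
    have hexp : (Chat ρ)⁻¹ * (Chat ρ) * (Chat ρ)⁻¹
        = (1-ρ) • ((Chat ρ)⁻¹ * A * (Chat ρ)⁻¹) + ρ • ((Chat ρ)⁻¹ * (Chat ρ)⁻¹) := by
      nth_rewrite 2 [hCdef ρ]
      simp [Matrix.mul_add, Matrix.add_mul, Matrix.mul_smul, Matrix.smul_mul]
    have hM : (1-ρ) • ((Chat ρ)⁻¹ * A * (Chat ρ)⁻¹) + ρ • ((Chat ρ)⁻¹ * (Chat ρ)⁻¹)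
        = (Chat ρ)⁻¹ := hexp.symm.trans hm
    have key : (1-ρ) * Φw ((Chat ρ)⁻¹)
        + ρ * (star g ⬝ᵥ ((((Chat ρ)⁻¹) * ((Chat ρ)⁻¹)) *ᵥ g)).re
        = Φu ((Chat ρ)⁻¹) := by
      have h := congrArg (fun M => (star g ⬝ᵥ (M *ᵥ g)).re) hM
      simpa [hΦw_def, hΦu_def, Matrix.add_mulVec, smul_mulVec, dotProduct_add,
        dotProduct_smul, Complex.real_smul, Complex.add_re, Complex.mul_re] using h
    set w := Φw ((Chat ρ)⁻¹)
    set u := Φu ((Chat ρ)⁻¹)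
    set v := (star g ⬝ᵥ ((((Chat ρ)⁻¹) ^ 2) *ᵥ g)).re with hv_def
    have hv : v = (star g ⬝ᵥ ((((Chat ρ)⁻¹) * ((Chat ρ)⁻¹)) *ᵥ g)).re := by
      rw [hv_def, pow_two]
    have hu0 : u ≠ 0 := (hu_pos ρ hρ').ne'
    have h1ρ : (1:ℝ) - ρ ≠ 0 := by have := hρ.2; intro h; linarith
    have hkey : ρ * v = u - (1-ρ) * w := by rw [hv]; linarith [key]
    show trR / (2 * (1-ρ) * N) * (1 - ρ * v / u) /
        (1 - c + c * ρ * ((1:ℝ)/N) * Φt ((Chat ρ)⁻¹)) ^ 2 = F ρ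
    rw [hF_def]
    have hab : trR / (2 * (1-ρ) * N) * (1 - ρ * v / u) = trR / (2 * N) * (w / u) := by
      rw [hkey]
      field_simp
      ring
    rw [hab]
  -- continuity
  have hCcont : Continuous Chat := by
    apply Continuous.add
    · exact (continuous_const.sub continuous_id).smul continuous_const
    · exact continuous_id.smul continuous_const
  have hChat1 : Chat 1 = 1 := by
    rw [hCdef]; simp
  have hRingInv : ContinuousAt Ring.inverse ((Chat 1).det) := by
    rw [hChat1, Matrix.det_one]
    simpa using NormedRing.inverse_continuousAt (1 : ℂˣ)
  have hinvcont : ContinuousAt (fun ρ => (Chat ρ)⁻¹) 1 :=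
    (continuousAt_matrix_inv (Chat 1) hRingInv).comp hCcont.continuousAt
  have hCinv1 : (Chat 1)⁻¹ = 1 := by rw [hChat1, inv_one]
  have hTend : Filter.Tendsto (fun ρ => (Chat ρ)⁻¹)
      (nhdsWithin 1 (Set.Ioo (0:ℝ) 1)) (nhds (1 : Matrix (Fin N) (Fin N) ℂ)) := by
    have h := hinvcont.tendsto
    rw [hCinv1] at h
    exact h.mono_left nhdsWithin_le_nhds
  have hΦwc : Continuous Φw :=
    Complex.continuous_re.comp
      (continuous_const.dotProduct
        (((continuous_id.matrix_mul continuous_const).matrix_mul continuous_id).matrix_mulVec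
          continuous_const))
  have hΦuc : Continuous Φu :=
    Complex.continuous_re.comp
      (continuous_const.dotProduct (continuous_id.matrix_mulVec continuous_const))
  have hΦtc : Continuous Φt :=
    Complex.continuous_re.comp continuous_id.matrix_trace
  have hρT : Filter.Tendsto (fun ρ : ℝ => ρ) (nhdsWithin 1 (Set.Ioo (0:ℝ) 1)) (nhds 1) :=
    Filter.tendsto_id.mono_left nhdsWithin_le_nhds
  have hwT : Filter.Tendsto (fun ρ => Φw ((Chat ρ)⁻¹))
      (nhdsWithin 1 (Set.Ioo (0:ℝ) 1)) (nhds (Φw 1)) :=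
    (hΦwc.continuousAt.tendsto).comp hTend
  have huT : Filter.Tendsto (fun ρ => Φu ((Chat ρ)⁻¹))
      (nhdsWithin 1 (Set.Ioo (0:ℝ) 1)) (nhds (Φu 1)) :=
    (hΦuc.continuousAt.tendsto).comp hTend
  have htT : Filter.Tendsto (fun ρ => Φt ((Chat ρ)⁻¹))
      (nhdsWithin 1 (Set.Ioo (0:ℝ) 1)) (nhds (Φt 1)) :=
    (hΦtc.continuousAt.tendsto).comp hTend
  -- values at 1
  have hgpos : 0 < (star g ⬝ᵥ g).re := by
    have h : 0 < star g ⬝ᵥ g := dotProduct_star_self_pos_iff.mpr hg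
    rw [Complex.pos_iff] at h
    exact h.1
  have hΦu1 : Φu 1 = (star g ⬝ᵥ g).re := by simp [hΦu_def]
  have hΦw1 : Φw 1 = s * (star g ⬝ᵥ (R *ᵥ g)).re := by
    simp [hΦw_def, hA_def, smul_mulVec, dotProduct_smul, Complex.real_smul,
      Complex.mul_re]
  have hΦt1 : Φt 1 = (N : ℝ) := by
    simp [hΦt_def, Matrix.trace_one]
  have hD1 : 1 - c + c * 1 * ((1:ℝ)/N) * Φt 1 = 1 := by
    rw [hΦt1]
    field_simp
    ring
  have hu1ne : Φu 1 ≠ 0 := by rw [hΦu1]; exact hgpos.ne'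
  have hDT : Filter.Tendsto (fun ρ => (1 - c + c * ρ * ((1:ℝ)/N) * Φt ((Chat ρ)⁻¹)) ^ 2)
      (nhdsWithin 1 (Set.Ioo (0:ℝ) 1)) (nhds ((1 - c + c * 1 * ((1:ℝ)/N) * Φt 1) ^ 2)) :=
    (((tendsto_const_nhds.add (((tendsto_const_nhds.mul hρT).mul
      tendsto_const_nhds).mul htT)))).pow 2
  have hD2ne : (1 - c + c * 1 * ((1:ℝ)/N) * Φt 1) ^ 2 ≠ 0 := by
    rw [hD1]; norm_num
  have hFT : Filter.Tendsto F (nhdsWithin 1 (Set.Ioo (0:ℝ) 1))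
      (nhds (trR / (2 * N) * (Φw 1 / Φu 1) / (1 - c + c * 1 * ((1:ℝ)/N) * Φt 1) ^ 2)) :=
    (tendsto_const_nhds.mul (hwT.div huT hu1ne)).div hDT hD2ne
  have hval : trR / (2 * N) * (Φw 1 / Φu 1) / (1 - c + c * 1 * ((1:ℝ)/N) * Φt 1) ^ 2
      = (star g ⬝ᵥ (R *ᵥ g)).re / (2 * (star g ⬝ᵥ g).re) := by
    rw [hD1, hΦw1, hΦu1, hs_def]
    field_simp
  rw [hval] at hFT
  refine hFT.congr' ?_
  filter_upwards [self_mem_nhdsWithin] with ρ hρ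
  exact (hEq ρ hρ).symm
end

section
/- Let N be a positive natural number, let R be an N×N complex Hermitian positive semidefinite matrix with Re(tr R) > 0, let g ∈ ℂ^N be a vector with gᴴ R g ≠ 0, and let c ∈ (0,1] be a real constant. For ρ ∈ (0,1) define Ĉ(ρ) = (1−ρ)·(N/Re(tr R))·R + ρ·I_N and θ̂(ρ) = ((1−ρ)N/Re(tr R)) · (1 − c + c·ρ·(1/N)·Re(tr Ĉ(ρ)⁻¹))² · (gᴴ Ĉ(ρ)⁻¹ g)² / (gᴴ Ĉ(ρ)⁻¹ g − ρ·gᴴ Ĉ(ρ)⁻² g). Then θ̂(ρ) tends to (gᴴ g)²/(gᴴ R g) as ρ tends to 1 from the left. -/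
open Matrix
open scoped ComplexOrder

lemma stmt15_psd_smul {n : ℕ} {M : Matrix (Fin n) (Fin n) ℂ} (hM : M.PosSemidef) {t : ℝ}
    (ht : 0 ≤ t) : (t • M).PosSemidef := by
  refine Matrix.PosSemidef.of_dotProduct_mulVec_nonneg ?_ ?_
  · unfold Matrix.IsHermitian
    rw [Matrix.conjTranspose_smul, hM.1.eq, star_trivial]
  · intro x
    rw [Matrix.smul_mulVec, dotProduct_smul, Complex.real_smul]
    exact mul_nonneg (by exact_mod_cast ht) (hM.dotProduct_mulVec_nonneg x)

lemma stmt15_pd_smul_one {n : ℕ} {t : ℝ} (ht : 0 < t) :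
    (t • (1 : Matrix (Fin n) (Fin n) ℂ)).PosDef := by
  refine Matrix.PosDef.of_dotProduct_mulVec_pos ?_ ?_
  · unfold Matrix.IsHermitian
    rw [Matrix.conjTranspose_smul, Matrix.conjTranspose_one, star_trivial]
  · intro x hx
    rw [Matrix.smul_mulVec, dotProduct_smul, Complex.real_smul,
      Matrix.one_mulVec]
    have hz : (0 : ℂ) < star x ⬝ᵥ x := Matrix.dotProduct_star_self_pos_iff.mpr hx
    rw [Complex.lt_def] at hz ⊢
    obtain ⟨h1, h2⟩ := hz
    simp only [Complex.zero_re, Complex.zero_im] at h1 h2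
    refine ⟨?_, ?_⟩
    · simpa [Complex.mul_re, ← h2] using mul_pos ht h1
    · simp [Complex.mul_im, ← h2]

lemma stmt15_real_aux (t n tr f x y : ℝ) (ht : t ≠ 0) :
    t * n / tr * f ^ 2 * x ^ 2 / (t * y) = n / tr * f ^ 2 * x ^ 2 / y := by
  have h : t * n / tr * f ^ 2 * x ^ 2 = t * (n / tr * f ^ 2 * x ^ 2) := by ring
  rw [h, mul_div_mul_left _ _ ht]

/-- the consistent noncentrality estimator
`θ̂(ρ) = ((1−ρ)N/tr R)·(1 − c + cρ(1/N) tr Ĉ(ρ)⁻¹)²·(gᴴ Ĉ(ρ)⁻¹ g)² /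
(gᴴ Ĉ(ρ)⁻¹ g − ρ gᴴ Ĉ(ρ)⁻² g)` built from the RSCM `Ĉ(ρ) = (1−ρ)(N/tr R)·R + ρ·I`
tends to `(gᴴ g)²/(gᴴ R g)` as `ρ → 1⁻`. -/
theorem stmt15 (N : ℕ) (hN : 0 < N) (R : Matrix (Fin N) (Fin N) ℂ)
    (hR : R.PosSemidef) (htr : 0 < (Matrix.trace R).re)
    (g : Fin N → ℂ) (hgR : star g ⬝ᵥ (R *ᵥ g) ≠ 0) (c : ℝ) (hc : c ∈ Set.Ioc (0 : ℝ) 1) :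
    let Chat : ℝ → Matrix (Fin N) (Fin N) ℂ := fun ρ =>
      (1 - ρ) • (((N : ℝ) / (Matrix.trace R).re) • R) + ρ • (1 : Matrix (Fin N) (Fin N) ℂ)
    let θhat : ℝ → ℝ := fun ρ =>
      ((1 - ρ) * (N : ℝ) / (Matrix.trace R).re) *
        (1 - c + c * ρ * ((1 : ℝ) / (N : ℝ)) * (Matrix.trace ((Chat ρ)⁻¹)).re) ^ 2 *
        (star g ⬝ᵥ ((Chat ρ)⁻¹ *ᵥ g)).re ^ 2 /
        ((star g ⬝ᵥ ((Chat ρ)⁻¹ *ᵥ g)).re -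
          ρ * (star g ⬝ᵥ ((((Chat ρ)⁻¹) ^ 2) *ᵥ g)).re)
    Filter.Tendsto θhat (nhdsWithin 1 (Set.Ioo (0 : ℝ) 1))
      (nhds ((star g ⬝ᵥ g).re ^ 2 / (star g ⬝ᵥ (R *ᵥ g)).re)) := by
  intro Chat θhat
  have hNR : (0 : ℝ) < N := by exact_mod_cast hN
  set α : ℝ := (N : ℝ) / (Matrix.trace R).re with hα
  have hαpos : 0 < α := div_pos hNR htr
  set A : Matrix (Fin N) (Fin N) ℂ := α • R with hAdef
  have hApsd : A.PosSemidef := stmt15_psd_smul hR hαpos.le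
  -- positivity of Re(gᴴ R g)
  have hgRre : 0 < (star g ⬝ᵥ (R *ᵥ g)).re := by
    have h0 := hR.dotProduct_mulVec_nonneg g
    rw [Complex.le_def] at h0
    simp only [Complex.zero_re, Complex.zero_im] at h0
    rcases h0 with ⟨hre, him⟩
    rcases lt_or_eq_of_le hre with h | h
    · exact h
    · exfalso
      exact hgR (Complex.ext h.symm him.symm)
  -- positive definiteness of Chat on Ioo
  have hPD : ∀ ρ ∈ Set.Ioo (0 : ℝ) 1, (Chat ρ).PosDef := by
    intro ρ hρ
    exact Matrix.PosDef.posSemidef_add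
      (stmt15_psd_smul (stmt15_psd_smul hR hαpos.le) (by linarith [hρ.2]))
      (stmt15_pd_smul_one hρ.1)
  -- continuity facts
  have hChatCont : Continuous Chat := by
    exact ((continuous_const.sub continuous_id).smul continuous_const).add
      (continuous_id.smul continuous_const)
  have hchat1 : Chat 1 = 1 := by simp [Chat]
  have hToInv : Filter.Tendsto (fun ρ => (Chat ρ)⁻¹)
      (nhdsWithin 1 (Set.Ioo (0 : ℝ) 1)) (nhds (1 : Matrix (Fin N) (Fin N) ℂ)) := by
    have h1 : ContinuousAt Inv.inv (1 : Matrix (Fin N) (Fin N) ℂ) := by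
      apply continuousAt_matrix_inv
      rw [Matrix.det_one]
      simpa using NormedRing.inverse_continuousAt (1 : ℂˣ)
    have h2 : Filter.Tendsto Chat (nhdsWithin 1 (Set.Ioo (0 : ℝ) 1))
        (nhds (1 : Matrix (Fin N) (Fin N) ℂ)) := by
      rw [← hchat1]
      exact (hChatCont.tendsto 1).mono_left nhdsWithin_le_nhds
    have h3 := h1.tendsto.comp h2
    simpa [Function.comp_def] using h3
  have hρto1 : Filter.Tendsto (fun ρ : ℝ => ρ) (nhdsWithin 1 (Set.Ioo (0 : ℝ) 1))
      (nhds (1 : ℝ)) := Filter.tendsto_id.mono_left nhdsWithin_le_nhds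
  -- the three scalar limits
  have hF : Filter.Tendsto
      (fun ρ => 1 - c + c * ρ * ((1 : ℝ) / (N : ℝ)) * (Matrix.trace ((Chat ρ)⁻¹)).re)
      (nhdsWithin 1 (Set.Ioo (0 : ℝ) 1)) (nhds 1) := by
    have htrc : Continuous fun M : Matrix (Fin N) (Fin N) ℂ => (Matrix.trace M).re :=
      Complex.continuous_re.comp (continuous_id.matrix_trace)
    have h1 : Filter.Tendsto (fun ρ => (Matrix.trace ((Chat ρ)⁻¹)).re)
        (nhdsWithin 1 (Set.Ioo (0 : ℝ) 1)) (nhds ((Matrix.trace (1 : Matrix (Fin N) (Fin N) ℂ)).re)) :=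
      (htrc.tendsto _).comp hToInv
    have h2 : (Matrix.trace (1 : Matrix (Fin N) (Fin N) ℂ)).re = (N : ℝ) := by
      simp [Matrix.trace_one]
    rw [h2] at h1
    have h3 : Filter.Tendsto (fun ρ => c * ρ * ((1 : ℝ) / (N : ℝ)) * (Matrix.trace ((Chat ρ)⁻¹)).re)
        (nhdsWithin 1 (Set.Ioo (0 : ℝ) 1)) (nhds (c * 1 * ((1 : ℝ) / (N : ℝ)) * (N : ℝ))) :=
      (((tendsto_const_nhds).mul hρto1).mul tendsto_const_nhds).mul h1
    have h4 : c * 1 * ((1 : ℝ) / (N : ℝ)) * (N : ℝ) = c := by field_simp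
    rw [h4] at h3
    have h5 := h3.const_add (1 - c)
    simpa using h5
  have hX : Filter.Tendsto (fun ρ => (star g ⬝ᵥ ((Chat ρ)⁻¹ *ᵥ g)).re)
      (nhdsWithin 1 (Set.Ioo (0 : ℝ) 1)) (nhds ((star g ⬝ᵥ g).re)) := by
    have hcont : Continuous fun M : Matrix (Fin N) (Fin N) ℂ => (star g ⬝ᵥ (M *ᵥ g)).re :=
      Complex.continuous_re.comp
        (continuous_const.dotProduct (continuous_id.matrix_mulVec continuous_const))
    have h1 := (hcont.tendsto _).comp hToInv
    simpa [Matrix.one_mulVec, Function.comp_def] using h1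
  have hY : Filter.Tendsto (fun ρ => (star g ⬝ᵥ (((Chat ρ)⁻¹ * A * (Chat ρ)⁻¹) *ᵥ g)).re)
      (nhdsWithin 1 (Set.Ioo (0 : ℝ) 1)) (nhds (α * (star g ⬝ᵥ (R *ᵥ g)).re)) := by
    have hcont : Continuous fun M : Matrix (Fin N) (Fin N) ℂ =>
        (star g ⬝ᵥ ((M * A * M) *ᵥ g)).re :=
      Complex.continuous_re.comp
        (continuous_const.dotProduct
          (((continuous_id.matrix_mul continuous_const).matrix_mul continuous_id).matrix_mulVec
            continuous_const))
    have h1 := (hcont.tendsto _).comp hToInv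
    have h2 : (star g ⬝ᵥ (((1 : Matrix (Fin N) (Fin N) ℂ) * A * 1) *ᵥ g)).re
        = α * (star g ⬝ᵥ (R *ᵥ g)).re := by
      rw [mul_one, one_mul, hAdef, Matrix.smul_mulVec, dotProduct_smul,
        Complex.smul_re, smul_eq_mul]
    rw [h2] at h1
    exact h1
  have hYne : α * (star g ⬝ᵥ (R *ᵥ g)).re ≠ 0 := (mul_pos hαpos hgRre).ne'
  -- the simplified function and its limit
  have hG : Filter.Tendsto (fun ρ =>
      α * (1 - c + c * ρ * ((1 : ℝ) / (N : ℝ)) * (Matrix.trace ((Chat ρ)⁻¹)).re) ^ 2 *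
        (star g ⬝ᵥ ((Chat ρ)⁻¹ *ᵥ g)).re ^ 2 /
        (star g ⬝ᵥ (((Chat ρ)⁻¹ * A * (Chat ρ)⁻¹) *ᵥ g)).re)
      (nhdsWithin 1 (Set.Ioo (0 : ℝ) 1))
      (nhds ((star g ⬝ᵥ g).re ^ 2 / (star g ⬝ᵥ (R *ᵥ g)).re)) := by
    have h1 := (((tendsto_const_nhds (x := α)).mul (hF.pow 2)).mul (hX.pow 2)).div hY hYne
    have h2 : α * 1 ^ 2 * (star g ⬝ᵥ g).re ^ 2 / (α * (star g ⬝ᵥ (R *ᵥ g)).re)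
        = (star g ⬝ᵥ g).re ^ 2 / (star g ⬝ᵥ (R *ᵥ g)).re := by
      rw [one_pow, mul_one]
      exact mul_div_mul_left _ _ hαpos.ne'
    rw [h2] at h1
    exact h1
  -- equality of θhat with the simplified function on Ioo
  apply tendsto_nhdsWithin_congr _ hG
  intro ρ hρ
  have h1ρ : (1 : ℝ) - ρ ≠ 0 := sub_ne_zero.mpr (ne_of_lt hρ.2).symm
  have hpd := hPD ρ hρ
  have hdet : IsUnit (Chat ρ).det := (Matrix.isUnit_iff_isUnit_det _).mp hpd.isUnit
  -- key matrix identity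
  have key : (Chat ρ)⁻¹ - ρ • ((Chat ρ)⁻¹) ^ 2
      = (1 - ρ) • ((Chat ρ)⁻¹ * A * (Chat ρ)⁻¹) := by
    have hsub : Chat ρ - ρ • (1 : Matrix (Fin N) (Fin N) ℂ) = (1 - ρ) • A := by
      show (1 - ρ) • A + ρ • (1 : Matrix (Fin N) (Fin N) ℂ) - ρ • 1 = (1 - ρ) • A
      rw [add_sub_cancel_right]
    have h1 : (Chat ρ)⁻¹ * Chat ρ = 1 := Matrix.nonsing_inv_mul _ hdet
    calc (Chat ρ)⁻¹ - ρ • ((Chat ρ)⁻¹) ^ 2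
        = (Chat ρ)⁻¹ * (Chat ρ - ρ • 1) * (Chat ρ)⁻¹ := by
          rw [Matrix.mul_sub, Matrix.sub_mul, Matrix.mul_smul, mul_one, Matrix.smul_mul,
            h1, Matrix.one_mul, sq]
      _ = (1 - ρ) • ((Chat ρ)⁻¹ * A * (Chat ρ)⁻¹) := by
          rw [hsub, Matrix.mul_smul, Matrix.smul_mul]
  -- denominator identity at the level of real parts
  have hden : (star g ⬝ᵥ ((Chat ρ)⁻¹ *ᵥ g)).re
      - ρ * (star g ⬝ᵥ ((((Chat ρ)⁻¹) ^ 2) *ᵥ g)).re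
      = (1 - ρ) * (star g ⬝ᵥ (((Chat ρ)⁻¹ * A * (Chat ρ)⁻¹) *ᵥ g)).re := by
    have h := congrArg (fun M : Matrix (Fin N) (Fin N) ℂ => (star g ⬝ᵥ (M *ᵥ g)).re) key
    simpa [Matrix.sub_mulVec, Matrix.smul_mulVec, dotProduct_sub,
      dotProduct_smul, Complex.smul_re] using h
  show α * _ ^ 2 * _ ^ 2 / _ = θhat ρ
  simp only [θhat]
  rw [hden, hα, stmt15_real_aux _ _ _ _ _ _ h1ρ]
end

section
/- Let v > 0, α ≥ 0, and μ ∈ ℝ, set λ = μ²/v, and let X be a random variable with the real Gaussian distribution of mean μ and variance v. Then ℙ(X² ≤ α) = e^{−λ/2} · Σ_{j=0}^{∞} ((λ/2)^j / j!) · γ((1+2j)/2, α/(2v)) / Γ((1+2j)/2), where γ(r, x) = ∫_0^x t^{r−1} e^{−t} dt is the lower incomplete gamma function and Γ is the gamma function; i.e. X²/v has the noncentral chi-squared distribution with 1 degree of freedom and noncentrality λ, with CDF given by the Poisson mixture of central chi-squared CDFs. -/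
open ProbabilityTheory MeasureTheory Real


lemma gamma_half (k : ℕ) :
    Real.Gamma ((k : ℝ) + 1 / 2) = (Nat.factorial (2 * k) : ℝ) * Real.sqrt π / (4 ^ k * Nat.factorial k) := by
  induction k with
  | zero => rw [show ((0:ℕ):ℝ) + 1 / 2 = 1 / 2 by norm_num, Real.Gamma_one_half_eq]; simp
  | succ n ih =>
    have h1 : ((n : ℝ) + 1) + 1 / 2 = ((n : ℝ) + 1 / 2) + 1 := by ring
    have h2 : ((n : ℝ) + 1 / 2) ≠ 0 := by positivity
    rw [Nat.cast_add, Nat.cast_one, h1, Real.Gamma_add_one h2, ih]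
    have e1 : 2 * (n + 1) = (2 * n + 1) + 1 := by ring
    rw [e1, Nat.factorial_succ, Nat.factorial_succ, Nat.factorial_succ]
    push_cast
    have h4 : (4:ℝ) ^ (n+1) = 4 * 4 ^ n := by ring
    rw [h4]
    have hf : (Nat.factorial n : ℝ) ≠ 0 := Nat.cast_ne_zero.mpr (Nat.factorial_ne_zero n)
    have h4n : (4:ℝ) ^ n ≠ 0 := by positivity
    field_simp
    ring

lemma subst_lemma (k : ℕ) (c : ℝ) (hc : 0 < c) (b : ℝ) (hb : 0 ≤ b) :
    ∫ x in Set.Ioo (0:ℝ) b, x ^ (2*k) * rexp (-(x^2)/(2*c)) =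
    c * (2*c) ^ ((k:ℝ) - 1/2) *
      ∫ t in Set.Ioo (0:ℝ) (b^2/(2*c)), t ^ ((k:ℝ) - 1/2) * rexp (-t) := by
  have h2c : (0:ℝ) < 2*c := by linarith
  set A : ℝ := (2*c) ^ ((k:ℝ) - 1/2) with hA
  have hApos : 0 < A := Real.rpow_pos_of_pos h2c _
  set f : ℝ → ℝ := fun x => x^2/(2*c) with hf
  have himg : f '' Set.Ioo 0 b = Set.Ioo 0 (b^2/(2*c)) := by
    ext t
    simp only [Set.mem_image, Set.mem_Ioo]
    constructor
    · rintro ⟨x, ⟨hx0, hxb⟩, rfl⟩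
      constructor
      · simp only [hf]; positivity
      · simp only [hf]
        gcongr
    · rintro ⟨ht0, htb⟩
      refine ⟨Real.sqrt (2*c*t), ⟨Real.sqrt_pos.mpr (by positivity), ?_⟩, ?_⟩
      · have hb0 : 0 < b := by
          by_contra h
          push_neg at h
          have : b = 0 := le_antisymm h hb
          rw [this] at htb; simp at htb; nlinarith
        rw [show b = Real.sqrt (b^2) from (Real.sqrt_sq hb).symm]
        apply Real.sqrt_lt_sqrt (by positivity)
        calc 2*c*t < 2*c*(b^2/(2*c)) := by gcongr
        _ = b^2 := by field_simp
      · simp only [hf]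
        rw [Real.sq_sqrt (by positivity)]
        field_simp
  have hderiv : ∀ x ∈ Set.Ioo (0:ℝ) b, HasDerivWithinAt f (x/c) (Set.Ioo (0:ℝ) b) x := by
    intro x hx
    have h := ((hasDerivAt_pow 2 x).div_const (2*c)).hasDerivWithinAt (s := Set.Ioo (0:ℝ) b)
    refine h.congr_deriv ?_
    field_simp
    ring
  have hinj : Set.InjOn f (Set.Ioo (0:ℝ) b) := by
    intro x hx y hy h
    simp only [hf] at h
    have hxy : x^2 = y^2 := by
      field_simp at h; linarith
    have := hx.1; have := hy.1
    apply le_antisymm <;> nlinarith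
  have key := MeasureTheory.integral_image_eq_integral_abs_deriv_smul measurableSet_Ioo hderiv hinj
    (fun t => c * A * (t ^ ((k:ℝ) - 1/2) * rexp (-t)))
  rw [himg] at key
  rw [MeasureTheory.integral_const_mul] at key
  rw [key]
  apply MeasureTheory.setIntegral_congr_fun measurableSet_Ioo
  intro x hx
  have hx0 : (0:ℝ) < x := hx.1
  simp only [hf, smul_eq_mul]
  have habs : |x/c| = x/c := abs_of_pos (by positivity)
  rw [habs]
  have hdr : (x^2/(2*c)) ^ ((k:ℝ) - 1/2) = (x^2) ^ ((k:ℝ) - 1/2) / A := by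
    rw [hA, Real.div_rpow (sq_nonneg x) h2c.le]
  have hx2 : (x^2 : ℝ) ^ ((k:ℝ) - 1/2) = x ^ (2*((k:ℝ) - 1/2)) := by
    rw [← Real.rpow_natCast x 2, ← Real.rpow_mul hx0.le]
    norm_num
  have hxe : x * x ^ (2*((k:ℝ) - 1/2)) = x ^ (2*k) := by
    rw [← Real.rpow_natCast x (2*k)]
    nth_rewrite 1 [← Real.rpow_one x]
    rw [← Real.rpow_add hx0]
    congr 1
    push_cast
    ring
  have hexp : -(x^2)/(2*c) = -(x^2/(2*c)) := by ring
  rw [hexp, hdr, hx2, ← hxe]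
  field_simp

lemma reflect_int (g : ℝ → ℝ) (hg : Continuous g) (b : ℝ) (hb : 0 ≤ b) :
    ∫ x in Set.Icc (-b) b, g x = (∫ x in (0:ℝ)..b, g (-x)) + ∫ x in (0:ℝ)..b, g x := by
  rw [MeasureTheory.integral_Icc_eq_integral_Ioc,
    ← intervalIntegral.integral_of_le (by linarith : -b ≤ b),
    intervalIntegral.integral_comp_neg g, show -(0:ℝ) = 0 from neg_zero,
    intervalIntegral.integral_add_adjacent_intervals (hg.intervalIntegrable _ _)
      (hg.intervalIntegrable _ _)]

lemma even_int (g : ℝ → ℝ) (hg : Continuous g) (hge : ∀ x, g (-x) = g x) (b : ℝ) (hb : 0 ≤ b) :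
    ∫ x in Set.Icc (-b) b, g x = 2 * ∫ x in Set.Ioo (0:ℝ) b, g x := by
  rw [reflect_int g hg b hb]
  simp only [hge]
  rw [intervalIntegral.integral_of_le hb, MeasureTheory.integral_Ioc_eq_integral_Ioo]
  ring

lemma odd_int (g : ℝ → ℝ) (hg : Continuous g) (hgo : ∀ x, g (-x) = - g x) (b : ℝ) (hb : 0 ≤ b) :
    ∫ x in Set.Icc (-b) b, g x = 0 := by
  rw [reflect_int g hg b hb]
  simp only [hgo, intervalIntegral.integral_neg]
  ring


noncomputable def myf (c μ : ℝ) (j : ℕ) (x : ℝ) : ℝ :=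
  rexp (-(x^2)/(2*c)) * ((x*μ/c)^j / (Nat.factorial j : ℝ))

lemma myf_cont (c μ : ℝ) (j : ℕ) : Continuous (myf c μ j) := by
  unfold myf; fun_prop

lemma myf_bound (c μ : ℝ) (hc : 0 < c) (a : ℝ) (ha : 0 ≤ a) (j : ℕ) :
    ∀ x ∈ Set.Icc (-a) a, ‖myf c μ j x‖ ≤ (a*|μ|/c)^j / (Nat.factorial j : ℝ) := by
  intro x hx
  have hxa : |x| ≤ a := abs_le.mpr ⟨hx.1, hx.2⟩
  have e1 : ‖myf c μ j x‖ = rexp (-(x^2)/(2*c)) * (|x*μ/c|^j / (Nat.factorial j : ℝ)) := by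
    simp [myf, abs_mul, abs_div, abs_of_pos (Real.exp_pos _), abs_pow, Nat.abs_cast]
  have h2 : |x*μ/c| ≤ a*|μ|/c := by
    rw [abs_div, abs_mul, abs_of_pos hc]
    gcongr
  have h3 : rexp (-(x^2)/(2*c)) ≤ 1 := by
    rw [Real.exp_le_one_iff]
    have h4 : (0:ℝ) ≤ x^2/(2*c) := by positivity
    have h5 : -(x^2)/(2*c) = -(x^2/(2*c)) := by ring
    linarith [h5 ▸ (neg_nonpos.mpr h4)]
  rw [e1]
  calc rexp (-(x^2)/(2*c)) * (|x*μ/c|^j / (Nat.factorial j : ℝ))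
      ≤ 1 * ((a*|μ|/c)^j / (Nat.factorial j : ℝ)) := by
        apply mul_le_mul h3 _ (by positivity) (by norm_num)
        gcongr
    _ = _ := one_mul _

lemma interchange (c : ℝ) (hc : 0 < c) (μ a : ℝ) (ha : 0 ≤ a) :
    ∫ x in Set.Icc (-a) a, ∑' j : ℕ, myf c μ j x
      = ∑' j : ℕ, ∫ x in Set.Icc (-a) a, myf c μ j x := by
  apply MeasureTheory.integral_tsum
  · exact fun j => ((myf_cont c μ j).aestronglyMeasurable).restrict
  · have hbd : ∀ j : ℕ, (∫⁻ x in Set.Icc (-a) a, ‖myf c μ j x‖₊)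
        ≤ ENNReal.ofReal ((a*|μ|/c)^j / (Nat.factorial j : ℝ)) * ENNReal.ofReal (2*a) := by
      intro j
      calc (∫⁻ x in Set.Icc (-a) a, ‖myf c μ j x‖₊)
          ≤ ∫⁻ _ in Set.Icc (-a) a, ENNReal.ofReal ((a*|μ|/c)^j / (Nat.factorial j : ℝ)) := by
            apply setLIntegral_mono' measurableSet_Icc
            intro x hx
            rw [← enorm_eq_nnnorm, ← ofReal_norm]
            exact ENNReal.ofReal_le_ofReal (myf_bound c μ hc a ha j x hx)
        _ = ENNReal.ofReal ((a*|μ|/c)^j / (Nat.factorial j : ℝ)) * volume (Set.Icc (-a) a) :=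
            setLIntegral_const _ _
        _ = ENNReal.ofReal ((a*|μ|/c)^j / (Nat.factorial j : ℝ)) * ENNReal.ofReal (2*a) := by
            rw [Real.volume_Icc]; norm_num; ring_nf
            rw [ENNReal.ofReal_mul' (p := a) (q := 2) (by norm_num), ENNReal.ofReal_ofNat]
            ring
    apply ne_top_of_le_ne_top (b := (∑' j : ℕ,
      ENNReal.ofReal ((a*|μ|/c)^j / (Nat.factorial j : ℝ)) * ENNReal.ofReal (2*a)))
    · rw [ENNReal.tsum_mul_right,
        ← ENNReal.ofReal_tsum_of_nonneg (fun j => by positivity) (Real.summable_pow_div_factorial _)]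
      exact ENNReal.mul_ne_top ENNReal.ofReal_ne_top ENNReal.ofReal_ne_top
    · exact ENNReal.tsum_le_tsum hbd


lemma const_id (c : ℝ) (hc : 0 < c) (μ : ℝ) (k : ℕ) :
    (Real.sqrt (2*π*c))⁻¹ * ((μ/c)^(2*k) / (Nat.factorial (2*k) : ℝ) * (2 * (c * (2*c) ^ ((k:ℝ) - 1/2)))) =
    ((μ^2/c/2)^k / (Nat.factorial k : ℝ)) * ((4^k * (Nat.factorial k : ℝ)) / ((Nat.factorial (2*k) : ℝ) * Real.sqrt π)) := by
  have h2c : (0:ℝ) < 2*c := by linarith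
  rw [Real.rpow_sub h2c, Real.rpow_natCast, ← Real.sqrt_eq_rpow,
    show 2*π*c = π*(2*c) by ring, Real.sqrt_mul pi_pos.le]
  set S : ℝ := Real.sqrt (2*c) with hSdef
  have hS : (0:ℝ) < S := Real.sqrt_pos.mpr h2c
  have hc' : c = S^2/2 := by rw [hSdef, Real.sq_sqrt h2c.le]; ring
  have hP : (0:ℝ) < Real.sqrt π := Real.sqrt_pos.mpr pi_pos
  have hfk : (Nat.factorial k : ℝ) ≠ 0 := Nat.cast_ne_zero.mpr (Nat.factorial_ne_zero k)
  have hf2k : (Nat.factorial (2*k) : ℝ) ≠ 0 := Nat.cast_ne_zero.mpr (Nat.factorial_ne_zero (2*k))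
  rw [hc', pow_mul, div_pow]
  field_simp
  ring_nf
  rw [show k * 4 = k * 2 + k * 2 by ring, pow_add, inv_pow]
  field_simp


/-- the square of a Gaussian with mean `μ` and variance `v`, divided by `v`,
is noncentral chi-squared with 1 degree of freedom and noncentrality `λ = μ²/v`:
`ℙ(X² ≤ α) = e^{−λ/2} Σ_j ((λ/2)^j/j!) · γ((1+2j)/2, α/(2v))/Γ((1+2j)/2)`,
the Poisson mixture of central chi-squared CDFs, with
`γ(r, x) = ∫_0^x t^{r−1} e^{−t} dt` the lower incomplete gamma function. -/
theorem stmt19 (v : NNReal) (hv : 0 < v) (α : ℝ) (hα : 0 ≤ α) (μ : ℝ) :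
    let lam : ℝ := μ ^ 2 / (v : ℝ)
    (gaussianReal μ v) {x : ℝ | x ^ 2 ≤ α} =
      ENNReal.ofReal
        (Real.exp (-(lam / 2)) * ∑' j : ℕ, ((lam / 2) ^ j / (Nat.factorial j : ℝ)) *
          ((∫ t in (0 : ℝ)..(α / (2 * (v : ℝ))),
              t ^ (((1 + 2 * (j : ℝ)) / 2) - 1) * Real.exp (-t)) /
            Real.Gamma ((1 + 2 * (j : ℝ)) / 2))) := by
  intro lam
  have hlam : lam = μ^2/(v:ℝ) := rfl
  have hc : (0:ℝ) < (v:ℝ) := by exact_mod_cast hv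
  set a : ℝ := Real.sqrt α with hadef
  have ha : 0 ≤ a := Real.sqrt_nonneg α
  have ha2 : a^2 = α := Real.sq_sqrt hα
  have hset : {x : ℝ | x^2 ≤ α} = Set.Icc (-a) a := by
    ext x
    simp only [Set.mem_setOf_eq, Set.mem_Icc]
    constructor
    · intro h
      exact abs_le_of_sq_le_sq' (by rw [ha2]; exact h) ha
    · rintro ⟨h1, h2⟩
      calc x^2 ≤ a^2 := sq_le_sq' h1 h2
      _ = α := ha2
  rw [hset, gaussianReal_apply_eq_integral μ hv.ne' _]
  congr 1
  set C0 : ℝ := (Real.sqrt (2*π*(v:ℝ)))⁻¹ * rexp (-(lam/2)) with hC0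
  have hpdf : ∀ x, gaussianPDFReal μ v x = C0 * (rexp (x*μ/(v:ℝ)) * rexp (-(x^2)/(2*(v:ℝ)))) := by
    intro x
    simp only [gaussianPDFReal, hC0, hlam]
    rw [show -(x-μ)^2/(2*(v:ℝ)) = x*μ/(v:ℝ) + (-(x^2)/(2*(v:ℝ)) + -(μ^2/(v:ℝ)/2)) by
      field_simp; ring]
    rw [Real.exp_add, Real.exp_add]
    rw [show -(μ^2/(v:ℝ)/2) = -(μ^2/(v:ℝ)/2) from rfl]
    ring_nf
  have key1 : ∫ x in Set.Icc (-a) a, gaussianPDFReal μ v x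
      = C0 * ∑' j : ℕ, ∫ x in Set.Icc (-a) a, myf (v:ℝ) μ j x := by
    rw [← interchange (v:ℝ) hc μ a ha, ← MeasureTheory.integral_const_mul]
    apply setIntegral_congr_fun measurableSet_Icc
    intro x _
    rw [hpdf x]
    congr 1
    have htsum : ∑' j : ℕ, myf (v:ℝ) μ j x
        = rexp (-(x^2)/(2*(v:ℝ))) * rexp (x*μ/(v:ℝ)) := by
      simp only [myf]
      rw [tsum_mul_left]
      congr 1
      rw [Real.exp_eq_exp_ℝ, NormedSpace.exp_eq_tsum_div]
    rw [htsum]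
    ring
  set F : ℕ → ℝ := fun j => ∫ x in Set.Icc (-a) a, myf (v:ℝ) μ j x with hFdef
  have hFodd : ∀ k : ℕ, F (2*k+1) = 0 := by
    intro k
    apply odd_int _ (myf_cont _ _ _) _ a ha
    intro x
    simp only [myf]
    rw [show ((-x)^2 : ℝ) = x^2 by ring,
      show (-x*μ/(v:ℝ)) = -(x*μ/(v:ℝ)) by ring, Odd.neg_pow ⟨k, by ring⟩]
    ring
  have hFsummable : Summable F := by
    apply Summable.of_norm_bounded
      (g := fun j => (a*|μ|/(v:ℝ))^j / (Nat.factorial j : ℝ) * (2*a))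
      ((Real.summable_pow_div_factorial (a*|μ|/(v:ℝ))).mul_right (2*a))
    intro j
    have hb := MeasureTheory.norm_setIntegral_le_of_norm_le_const
      (s := Set.Icc (-a) a) (μ := volume)
      (C := (a*|μ|/(v:ℝ))^j / (Nat.factorial j : ℝ))
      (by rw [Real.volume_Icc]; exact ENNReal.ofReal_lt_top)
      (myf_bound _ _ hc a ha j)
    calc ‖F j‖ ≤ (a*|μ|/(v:ℝ))^j / (Nat.factorial j : ℝ) * (volume (Set.Icc (-a) a)).toReal := hb
    _ = (a*|μ|/(v:ℝ))^j / (Nat.factorial j : ℝ) * (2*a) := by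
        rw [Real.volume_Icc, ENNReal.toReal_ofReal (by linarith)]
        ring_nf
  have heven : Summable (fun k => F (2*k)) :=
    hFsummable.comp_injective (fun m n h => by omega)
  have hodd : Summable (fun k => F (2*k+1)) :=
    hFsummable.comp_injective (fun m n h => by omega)
  have hsplit : ∑' j, F j = ∑' k, F (2*k) := by
    rw [← tsum_even_add_odd heven hodd]
    simp [hFodd]
  have hFeven : ∀ k : ℕ, F (2*k) = (μ/(v:ℝ))^(2*k) / (Nat.factorial (2*k) : ℝ) *
      (2 * ((v:ℝ) * (2*(v:ℝ)) ^ ((k:ℝ)-1/2) *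
        ∫ t in Set.Ioo (0:ℝ) (α/(2*(v:ℝ))), t ^ ((k:ℝ)-1/2) * rexp (-t))) := by
    intro k
    have e1 : F (2*k) = (μ/(v:ℝ))^(2*k) / (Nat.factorial (2*k) : ℝ) *
        ∫ x in Set.Icc (-a) a, x^(2*k) * rexp (-(x^2)/(2*(v:ℝ))) := by
      rw [hFdef, ← MeasureTheory.integral_const_mul]
      apply setIntegral_congr_fun measurableSet_Icc
      intro x _
      simp only [myf]
      rw [show x*μ/(v:ℝ) = x*(μ/(v:ℝ)) by ring, mul_pow]
      ring
    rw [e1, even_int _ (by fun_prop)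
      (fun x => by rw [show ((-x)^2:ℝ) = x^2 by ring, Even.neg_pow ⟨k, by ring⟩]) a ha,
      subst_lemma k (v:ℝ) hc a ha, ha2]
  rw [key1, hsplit]
  have hT : ∀ j : ℕ, ((lam/2)^j / (Nat.factorial j : ℝ)) *
      ((∫ t in (0:ℝ)..(α/(2*(v:ℝ))), t ^ (((1+2*(j:ℝ))/2)-1) * rexp (-t)) /
        Real.Gamma ((1+2*(j:ℝ))/2))
      = ((lam/2)^j / (Nat.factorial j : ℝ)) *
        ((∫ t in Set.Ioo (0:ℝ) (α/(2*(v:ℝ))), t ^ ((j:ℝ)-1/2) * rexp (-t)) *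
          ((4^j * (Nat.factorial j : ℝ)) / ((Nat.factorial (2*j) : ℝ) * Real.sqrt π))) := by
    intro j
    rw [show ((1+2*(j:ℝ))/2)-1 = (j:ℝ)-1/2 by ring,
      show (1+2*(j:ℝ))/2 = (j:ℝ)+1/2 by ring, gamma_half j,
      intervalIntegral.integral_of_le (by positivity),
      MeasureTheory.integral_Ioc_eq_integral_Ioo]
    have hfj : (Nat.factorial j : ℝ) ≠ 0 := Nat.cast_ne_zero.mpr (Nat.factorial_ne_zero j)
    have hf2j : (Nat.factorial (2*j) : ℝ) ≠ 0 := Nat.cast_ne_zero.mpr (Nat.factorial_ne_zero (2*j))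
    have hP : (0:ℝ) < Real.sqrt π := Real.sqrt_pos.mpr pi_pos
    field_simp
  simp only [hT]
  rw [← tsum_mul_left, ← tsum_mul_left]
  apply tsum_congr
  intro k
  rw [hFeven k]
  have hci := const_id (v:ℝ) hc μ k
  have hlam2 : lam/2 = μ^2/(v:ℝ)/2 := by rw [hlam]
  rw [hC0, hlam2]
  linear_combination (rexp (-(μ^2/(v:ℝ)/2)) *
    (∫ t in Set.Ioo (0:ℝ) (α/(2*(v:ℝ))), t ^ ((k:ℝ)-1/2) * rexp (-t))) * hci
end
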